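/- Let (X,T) be a topological dynamical system and Φ = {φ_n} a supadditive potential on X. Fix a positive integer k. Then for any η > 0 there exists ε₀ > 0 and a constant C (independent of η and ε) such that for all 0 < ε < ε₀, all n ≥ 1, and all x ∈ X, φ_n(x) ≥ sup_{y ∈ B_n(x,ε)} Σ_{i=0}^{n−1} (1/k) φ_k(T^i y) − nη − C. -/

import Mathlib

open MeasureTheory Filter Set Topology
open scoped ENNReal NNReal

noncomputable section

variable {X : Type*}

/-- The Bowen ball `B_n(x, ε)` for the map `T`. -/
def bowenBall [PseudoMetricSpace X] (T : X → X) (n : ℕ) (x : X) (ε : ℝ) : Set X :=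
  {y | ∀ i < n, dist (T^[i] x) (T^[i] y) < ε}

/-- Supremum of `g` over the Bowen ball `B_n(x,ε)`. -/
def supBowen [PseudoMetricSpace X] (T : X → X) (g : X → ℝ) (n : ℕ) (x : X) (ε : ℝ) : ℝ :=
  sSup (g '' bowenBall T n x ε)

/-- A subadditive potential: a sequence of continuous functions `f n` (for `n ≥ 1`)
with `f (n+m) x ≤ f n x + f m (T^[n] x)`. -/
def IsSubadditivePotential [TopologicalSpace X] (T : X → X) (f : ℕ → X → ℝ) : Prop :=
  (∀ n, 1 ≤ n → Continuous (f n)) ∧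
    ∀ n m, 1 ≤ n → 1 ≤ m → ∀ x : X, f (n + m) x ≤ f n x + f m (T^[n] x)

/-- A supadditive potential. -/
def IsSupadditivePotential [TopologicalSpace X] (T : X → X) (f : ℕ → X → ℝ) : Prop :=
  (∀ n, 1 ≤ n → Continuous (f n)) ∧
    ∀ n m, 1 ≤ n → 1 ≤ m → ∀ x : X, f (n + m) x ≥ f n x + f m (T^[n] x)

/-- The additive potential generated by a function `ψ` (Birkhoff sums). -/
def birkhoffPot (T : X → X) (ψ : X → ℝ) : ℕ → X → ℝ :=
  fun n x => ∑ i ∈ Finset.range n, ψ (T^[i] x)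

section Carath

variable [PseudoMetricSpace X]

/-- Generic Carathéodory sum `M(Z,·,s,N,ε)`; the weight `w n x ε` is the exponent
attached to the Bowen ball `B_n(x,ε)`. -/
def Mcara (T : X → X) (w : ℕ → X → ℝ → ℝ) (Z : Set X) (s : ℝ) (N : ℕ) (ε : ℝ) : ℝ≥0∞ :=
  ⨅ (c : Set (X × ℕ)) (_ : ∀ p ∈ c, N ≤ p.2)
    (_ : Z ⊆ ⋃ p ∈ c, bowenBall T p.2 p.1 ε),
    ∑' p : c, ENNReal.ofReal
      (Real.exp (-s * ((p : X × ℕ).2 : ℝ) + w (p : X × ℕ).2 (p : X × ℕ).1 ε))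

/-- `m(Z,·,s,ε) = lim_{N→∞} M(Z,·,s,N,ε)` (the limit of the monotone quantity). -/
def mcara (T : X → X) (w : ℕ → X → ℝ → ℝ) (Z : Set X) (s ε : ℝ) : ℝ≥0∞ :=
  ⨆ N, Mcara T w Z s N ε

/-- Carathéodory (topological) pressure on `Z` at scale `ε`. -/
def cPressEps (T : X → X) (w : ℕ → X → ℝ → ℝ) (Z : Set X) (ε : ℝ) : ℝ :=
  sInf {s : ℝ | mcara T w Z s ε = 0}

/-- Carathéodory (topological) pressure `P_Z(T,·)`. -/
def cPress (T : X → X) (w : ℕ → X → ℝ → ℝ) (Z : Set X) : ℝ :=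
  liminf (fun ε => cPressEps T w Z ε) (𝓝[>] (0 : ℝ))

/-- `Λ(Z,·,N,ε)`: covers with Bowen balls all of order `N`. -/
def lamCov (T : X → X) (w : ℕ → X → ℝ → ℝ) (Z : Set X) (N : ℕ) (ε : ℝ) : ℝ≥0∞ :=
  ⨅ (c : Set X) (_ : Z ⊆ ⋃ x ∈ c, bowenBall T N x ε),
    ∑' x : c, ENNReal.ofReal (Real.exp (w N (x : X) ε))

/-- Lower capacity pressure at scale `ε`. -/
def CPlowEps (T : X → X) (w : ℕ → X → ℝ → ℝ) (Z : Set X) (ε : ℝ) : ℝ :=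
  liminf (fun N : ℕ => (N : ℝ)⁻¹ * Real.log (lamCov T w Z N ε).toReal) atTop

/-- Upper capacity pressure at scale `ε`. -/
def CPupEps (T : X → X) (w : ℕ → X → ℝ → ℝ) (Z : Set X) (ε : ℝ) : ℝ :=
  limsup (fun N : ℕ => (N : ℝ)⁻¹ * Real.log (lamCov T w Z N ε).toReal) atTop

def CPlow (T : X → X) (w : ℕ → X → ℝ → ℝ) (Z : Set X) : ℝ :=
  liminf (fun ε => CPlowEps T w Z ε) (𝓝[>] (0 : ℝ))

def CPup (T : X → X) (w : ℕ → X → ℝ → ℝ) (Z : Set X) : ℝ :=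
  liminf (fun ε => CPupEps T w Z ε) (𝓝[>] (0 : ℝ))

/-- The subadditive weight: `sup_{y ∈ B_n(x,ε)} f_n(y)`. -/
def wSub (T : X → X) (f : ℕ → X → ℝ) : ℕ → X → ℝ → ℝ :=
  fun n x ε => supBowen T (f n) n x ε

/-- The supadditive weight: the value `f_n(x)` at the centre. -/
def wSup (f : ℕ → X → ℝ) : ℕ → X → ℝ → ℝ :=
  fun n x _ => f n x

end Carath

section MeasDefs

variable [PseudoMetricSpace X] [MeasurableSpace X]

/-- `P_μ(T,·,n,ε,δ)` via `(n,ε,δ)`-spanning sets. -/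
def spanPress (T : X → X) (w : ℕ → X → ℝ → ℝ) (μ : Measure X) (n : ℕ) (ε δ : ℝ) : ℝ :=
  sInf { r : ℝ | ∃ E : Finset X,
    ENNReal.ofReal (1 - δ) ≤ μ (⋃ x ∈ E, bowenBall T n x ε) ∧
    r = ∑ x ∈ E, Real.exp (w n x ε) }

def spanPressEpsDelta (T : X → X) (w : ℕ → X → ℝ → ℝ) (μ : Measure X) (ε δ : ℝ) : ℝ :=
  limsup (fun n : ℕ => (n : ℝ)⁻¹ * Real.log (spanPress T w μ n ε δ)) atTop

def spanPressDelta (T : X → X) (w : ℕ → X → ℝ → ℝ) (μ : Measure X) (δ : ℝ) : ℝ :=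
  liminf (fun ε => spanPressEpsDelta T w μ ε δ) (𝓝[>] (0 : ℝ))

/-- The measure-theoretic pressure `P_μ(T,·)`. -/
def measPress (T : X → X) (w : ℕ → X → ℝ → ℝ) (μ : Measure X) : ℝ :=
  liminf (fun δ => spanPressDelta T w μ δ) (𝓝[>] (0 : ℝ))

/-- `P*_μ(T,·,ε) = inf {P_Z(T,·,ε) : μ Z = 1}`. -/
def cPressStarEps (T : X → X) (w : ℕ → X → ℝ → ℝ) (μ : Measure X) (ε : ℝ) : ℝ :=
  sInf { p : ℝ | ∃ Z : Set X, μ Z = 1 ∧ p = cPressEps T w Z ε }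

/-- `P*_μ(T,·)`. -/
def cPressStar (T : X → X) (w : ℕ → X → ℝ → ℝ) (μ : Measure X) : ℝ :=
  liminf (fun ε => cPressStarEps T w μ ε) (𝓝[>] (0 : ℝ))

def CPlowStarEps (T : X → X) (w : ℕ → X → ℝ → ℝ) (μ : Measure X) (ε : ℝ) : ℝ :=
  liminf (fun δ : ℝ =>
      sInf { p : ℝ | ∃ Z : Set X, ENNReal.ofReal (1 - δ) ≤ μ Z ∧ p = CPlowEps T w Z ε })
    (𝓝[>] (0 : ℝ))

def CPupStarEps (T : X → X) (w : ℕ → X → ℝ → ℝ) (μ : Measure X) (ε : ℝ) : ℝ :=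
  liminf (fun δ : ℝ =>
      sInf { p : ℝ | ∃ Z : Set X, ENNReal.ofReal (1 - δ) ≤ μ Z ∧ p = CPupEps T w Z ε })
    (𝓝[>] (0 : ℝ))

def CPlowStar (T : X → X) (w : ℕ → X → ℝ → ℝ) (μ : Measure X) : ℝ :=
  liminf (fun ε => CPlowStarEps T w μ ε) (𝓝[>] (0 : ℝ))

def CPupStar (T : X → X) (w : ℕ → X → ℝ → ℝ) (μ : Measure X) : ℝ :=
  liminf (fun ε => CPupStarEps T w μ ε) (𝓝[>] (0 : ℝ))

/-- `F_*(μ) = inf_{n ≥ 1} (1/n)∫ f_n dμ` (subadditive case). -/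
def potStarInf (f : ℕ → X → ℝ) (μ : Measure X) : ℝ :=
  sInf { r : ℝ | ∃ n : ℕ, 1 ≤ n ∧ r = (n : ℝ)⁻¹ * ∫ x, f n x ∂μ }

/-- `Φ_*(μ) = sup_{n ≥ 1} (1/n)∫ φ_n dμ` (supadditive case). -/
def potStarSup (f : ℕ → X → ℝ) (μ : Measure X) : ℝ :=
  sSup { r : ℝ | ∃ n : ℕ, 1 ≤ n ∧ r = (n : ℝ)⁻¹ * ∫ x, f n x ∂μ }

/-- The Brin–Katok local entropy of `μ` at `x` equals `h`. -/
def LocalEntEq (T : X → X) (μ : Measure X) (x : X) (h : ℝ) : Prop :=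
  Tendsto (fun ε : ℝ =>
      limsup (fun n : ℕ => (n : ℝ)⁻¹ * (-(Real.log ((μ (bowenBall T n x ε)).toReal)))) atTop)
    (𝓝[>] (0 : ℝ)) (𝓝 h)

end MeasDefs

section Entropy

variable [MeasurableSpace X]

/-- Entropy of the `n`-th dynamical refinement of the finite partition `P`. -/
def dynH (T : X → X) (μ : Measure X) {k : ℕ} (P : Fin k → Set X) (n : ℕ) : ℝ :=
  ∑ a : Fin n → Fin k,
    Real.negMulLog (μ (⋂ i : Fin n, T^[(i : ℕ)] ⁻¹' P (a i))).toReal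

/-- The Kolmogorov–Sinai (measure-theoretic) entropy of `T` w.r.t. `μ`: the supremum,
over finite measurable partitions `P`, of `lim_n (1/n) H(⋁_{i<n} T^{-i}P)`. -/
def ksEntropy (T : X → X) (μ : Measure X) : ℝ :=
  sSup { h : ℝ | ∃ (k : ℕ) (P : Fin k → Set X),
    (∀ i, MeasurableSet (P i)) ∧ Pairwise (Function.onFun Disjoint P) ∧
    (⋃ i, P i) = univ ∧
    h = liminf (fun n : ℕ => (n : ℝ)⁻¹ * dynH T μ P n) atTop }

end Entropy

end

private lemma chain_lemma {X : Type*} [TopologicalSpace X] (T : X → X) (φ : ℕ → X → ℝ)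
    (hφ : IsSupadditivePotential T φ) (k : ℕ) (hk : 1 ≤ k) :
    ∀ m, 1 ≤ m → ∀ x : X, ∑ j ∈ Finset.range m, φ k (T^[j * k] x) ≤ φ (m * k) x := by
  intro m
  induction m with
  | zero => omega
  | succ m ih =>
    intro _ x
    rcases Nat.eq_zero_or_pos m with hm | hm
    · subst hm; simp
    · have h1 : ∑ j ∈ Finset.range (m + 1), φ k (T^[j * k] x)
          = (∑ j ∈ Finset.range m, φ k (T^[j * k] x)) + φ k (T^[m * k] x) := by
        rw [Finset.sum_range_succ]
      have h2 := hφ.2 (m * k) k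
        (Nat.one_le_iff_ne_zero.mpr (Nat.mul_ne_zero (by omega) (by omega))) hk x
      have h3 := ih hm x
      have : (m + 1) * k = m * k + k := by ring
      rw [h1, this]
      linarith [h2]

private lemma b0_lemma {X : Type*} [TopologicalSpace X] (T : X → X) (φ : ℕ → X → ℝ)
    (hφ : IsSupadditivePotential T φ) (k : ℕ) (hk : 1 ≤ k)
    (M : ℝ) (hM : ∀ j, 1 ≤ j → j ≤ k → ∀ x : X, |φ j x| ≤ M) :
    ∀ n, 1 ≤ n → ∀ x : X, ∑ j ∈ Finset.range (n / k), φ k (T^[j * k] x) ≤ φ n x + M := by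
  intro n hn x
  have hM0 : (0 : ℝ) ≤ M := le_trans (abs_nonneg _) (hM k hk le_rfl x)
  have hqr : k * (n / k) + n % k = n := Nat.div_add_mod n k
  have hrk : n % k < k := Nat.mod_lt _ (by omega)
  have hcomm : (n / k) * k = k * (n / k) := Nat.mul_comm _ _
  rcases Nat.eq_zero_or_pos (n / k) with hq0 | hq0
  · rw [hq0]
    simp only [Finset.range_zero, Finset.sum_empty]
    rw [hq0, Nat.mul_zero, Nat.zero_add] at hqr
    have := hM n hn (by omega) x
    have := neg_abs_le (φ n x)
    linarith
  · have hchain := chain_lemma T φ hφ k hk (n / k) hq0 x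
    rcases Nat.eq_zero_or_pos (n % k) with hr0 | hr0
    · have hnq : (n / k) * k = n := by omega
      rw [hnq] at hchain
      linarith
    · have hsup := hφ.2 ((n / k) * k) (n % k)
        (Nat.one_le_iff_ne_zero.mpr (Nat.mul_ne_zero (by omega) (by omega))) hr0 x
      have hnq : (n / k) * k + n % k = n := by omega
      rw [hnq] at hsup
      have hbd := hM (n % k) hr0 (by omega) (T^[(n / k) * k] x)
      have := neg_abs_le (φ (n % k) (T^[(n / k) * k] x))
      linarith

private lemma offset_lemma {X : Type*} [TopologicalSpace X] (T : X → X) (φ : ℕ → X → ℝ)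
    (hφ : IsSupadditivePotential T φ) (k : ℕ) (hk : 1 ≤ k)
    (M : ℝ) (hM : ∀ j, 1 ≤ j → j ≤ k → ∀ x : X, |φ j x| ≤ M) :
    ∀ a, a < k → ∀ n, 1 ≤ n → ∀ x : X,
      ∑ j ∈ Finset.range ((n - a) / k), φ k (T^[a + j * k] x) ≤ φ n x + 2 * M := by
  intro a ha n hn x
  have hM0 : (0 : ℝ) ≤ M := le_trans (abs_nonneg _) (hM k hk le_rfl x)
  rcases Nat.eq_zero_or_pos a with ha0 | ha0
  · subst ha0
    simp only [Nat.sub_zero, zero_add]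
    have := b0_lemma T φ hφ k hk M hM n hn x
    linarith
  · rcases le_or_gt n a with hna | hna
    · have : n - a = 0 := by omega
      rw [this]
      simp only [Nat.zero_div, Finset.range_zero, Finset.sum_empty]
      have := hM n hn (by omega) x
      have := neg_abs_le (φ n x)
      linarith
    · have hsub : 1 ≤ n - a := by omega
      have hsup := hφ.2 a (n - a) ha0 hsub x
      rw [show a + (n - a) = n by omega] at hsup
      have hb0 := b0_lemma T φ hφ k hk M hM (n - a) hsub (T^[a] x)
      have hiter : ∀ j : ℕ, T^[a + j * k] x = T^[j * k] (T^[a] x) := by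
        intro j; rw [add_comm, Function.iterate_add_apply]
      rw [Finset.sum_congr rfl (fun j _ => by rw [hiter j])]
      have hbd := hM a ha0 (by omega) x
      have := neg_abs_le (φ a x)
      linarith

private lemma reindex_lemma (k n : ℕ) (hk : 1 ≤ k) (g : ℕ → ℝ) :
    ∑ a ∈ Finset.range k, ∑ j ∈ Finset.range ((n - a) / k), g (a + j * k)
      = ∑ i ∈ (Finset.range n).filter (fun i => i + k ≤ n), g i := by
  rw [Finset.sum_sigma']
  refine Finset.sum_nbij' (fun p => p.1 + p.2 * k) (fun i => ⟨i % k, i / k⟩) ?_ ?_ ?_ ?_ ?_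
  · rintro ⟨a, j⟩ hp
    simp only [Finset.mem_sigma, Finset.mem_range] at hp
    obtain ⟨ha, hj⟩ := hp
    have h1 : j + 1 ≤ (n - a) / k := hj
    have h2 : (j + 1) * k ≤ n - a := (Nat.le_div_iff_mul_le (by omega)).mp h1
    have h3 : (j + 1) * k = j * k + k := by ring
    simp only [Finset.mem_filter, Finset.mem_range]
    omega
  · intro i hi
    simp only [Finset.mem_filter, Finset.mem_range] at hi
    simp only [Finset.mem_sigma, Finset.mem_range]
    have hmod : i % k < k := Nat.mod_lt _ (by omega)
    refine ⟨hmod, ?_⟩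
    have hdm : k * (i / k) + i % k = i := Nat.div_add_mod i k
    have hc : (i / k + 1) * k = k * (i / k) + k := by ring
    have : (i / k + 1) * k ≤ n - i % k := by omega
    exact (Nat.le_div_iff_mul_le (by omega)).mpr this
  · rintro ⟨a, j⟩ hp
    simp only [Finset.mem_sigma, Finset.mem_range] at hp
    have h1 : (a + j * k) % k = a := by
      rw [Nat.add_mul_mod_self_right, Nat.mod_eq_of_lt hp.1]
    have h2 : (a + j * k) / k = j := by
      rw [Nat.add_mul_div_right _ _ (by omega : 0 < k), Nat.div_eq_of_lt hp.1, Nat.zero_add]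
    simp only [h1, h2]
  · intro i hi
    simp only
    have hdm : k * (i / k) + i % k = i := Nat.div_add_mod i k
    have hc : i / k * k = k * (i / k) := Nat.mul_comm _ _
    omega
  · rintro ⟨a, j⟩ _
    rfl

private lemma sum_phi_le {X : Type*} [TopologicalSpace X] (T : X → X) (φ : ℕ → X → ℝ)
    (hφ : IsSupadditivePotential T φ) (k : ℕ) (hk : 1 ≤ k)
    (M : ℝ) (hM : ∀ j, 1 ≤ j → j ≤ k → ∀ x : X, |φ j x| ≤ M) :
    ∀ n, 1 ≤ n → ∀ x : X,
      ∑ i ∈ Finset.range n, φ k (T^[i] x) ≤ k * φ n x + 3 * k * M := by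
  intro n hn x
  have hM0 : (0 : ℝ) ≤ M := le_trans (abs_nonneg _) (hM k hk le_rfl x)
  have hsplit := Finset.sum_filter_add_sum_filter_not (Finset.range n)
    (fun i => i + k ≤ n) (fun i => φ k (T^[i] x))
  have h1 : ∑ i ∈ (Finset.range n).filter (fun i => i + k ≤ n), φ k (T^[i] x)
      ≤ k * φ n x + 2 * k * M := by
    rw [← reindex_lemma k n hk (fun i => φ k (T^[i] x))]
    calc ∑ a ∈ Finset.range k, ∑ j ∈ Finset.range ((n - a) / k), φ k (T^[a + j * k] x)
        ≤ ∑ _a ∈ Finset.range k, (φ n x + 2 * M) := by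
          refine Finset.sum_le_sum fun a ha => ?_
          exact offset_lemma T φ hφ k hk M hM a (Finset.mem_range.mp ha) n hn x
      _ = k * φ n x + 2 * k * M := by
          rw [Finset.sum_const, Finset.card_range, nsmul_eq_mul]
          ring
  have h2 : ∑ i ∈ (Finset.range n).filter (fun i => ¬ i + k ≤ n), φ k (T^[i] x)
      ≤ k * M := by
    have hcard : ((Finset.range n).filter (fun i => ¬ i + k ≤ n)).card ≤ k := by
      have hsub : (Finset.range n).filter (fun i => ¬ i + k ≤ n) ⊆ Finset.Ico (n - k) n := by
        intro i hi
        simp only [Finset.mem_filter, Finset.mem_range] at hi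
        simp only [Finset.mem_Ico]
        omega
      calc ((Finset.range n).filter (fun i => ¬ i + k ≤ n)).card
          ≤ (Finset.Ico (n - k) n).card := Finset.card_le_card hsub
        _ = n - (n - k) := Nat.card_Ico _ _
        _ ≤ k := by omega
    calc ∑ i ∈ (Finset.range n).filter (fun i => ¬ i + k ≤ n), φ k (T^[i] x)
        ≤ ∑ _i ∈ (Finset.range n).filter (fun i => ¬ i + k ≤ n), M := by
          refine Finset.sum_le_sum fun i _ => ?_
          exact le_trans (le_abs_self _) (hM k hk le_rfl _)
      _ = ((Finset.range n).filter (fun i => ¬ i + k ≤ n)).card * M := by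
          rw [Finset.sum_const, nsmul_eq_mul]
      _ ≤ k * M := by
          apply mul_le_mul_of_nonneg_right _ hM0
          exact_mod_cast hcard
  linarith [hsplit]

/-- **Sublemma 4.10.** For a supadditive potential `Φ` and a fixed `k ≥ 1`, there is a
constant `C` (independent of `η` and `ε`) such that for every `η > 0` there is
`ε₀ > 0` with `φ_n(x) ≥ sup_{y ∈ B_n(x,ε)} Σ_{i<n} (1/k)φ_k(T^i y) − nη − C`
for all `0 < ε < ε₀`, `n ≥ 1` and `x ∈ X`. -/
theorem supadditive_inf_bowen_bound
    {X : Type*} [MetricSpace X] [CompactSpace X]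
    (T : X → X) (hT : Continuous T)
    (φ : ℕ → X → ℝ) (hφ : IsSupadditivePotential T φ)
    (k : ℕ) (hk : 1 ≤ k) :
    ∃ C : ℝ, ∀ η : ℝ, 0 < η → ∃ ε₀ : ℝ, 0 < ε₀ ∧ ∀ ε : ℝ, 0 < ε → ε < ε₀ →
      ∀ n : ℕ, 1 ≤ n → ∀ x : X,
        supBowen T (birkhoffPot T (fun y => (k : ℝ)⁻¹ * φ k y) n) n x ε - n * η - C ≤
          φ n x := by
  -- Uniform bound on `φ j` for `1 ≤ j ≤ k`
  obtain ⟨Mf, hMf⟩ : ∃ Mf : ℕ → ℝ, ∀ j, 1 ≤ j → j ≤ k → ∀ x : X, |φ j x| ≤ Mf j := by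
    have h : ∀ j : ℕ, ∃ Mj : ℝ, 1 ≤ j → j ≤ k → ∀ x : X, |φ j x| ≤ Mj := by
      intro j
      by_cases hj : 1 ≤ j ∧ j ≤ k
      · obtain ⟨Mj, hMj⟩ :=
          isCompact_univ.exists_bound_of_continuousOn (hφ.1 j hj.1).continuousOn
        exact ⟨Mj, fun _ _ x => by simpa using hMj x (Set.mem_univ x)⟩
      · exact ⟨0, fun h1 h2 => absurd ⟨h1, h2⟩ hj⟩
    choose Mf hMf using h
    exact ⟨Mf, fun j h1 h2 => hMf j h1 h2⟩
  set M : ℝ := ∑ j ∈ Finset.Icc 1 k, max (Mf j) 0 with hMdef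
  have hM : ∀ j, 1 ≤ j → j ≤ k → ∀ x : X, |φ j x| ≤ M := by
    intro j h1 h2 x
    calc |φ j x| ≤ max (Mf j) 0 := le_trans (hMf j h1 h2 x) (le_max_left _ _)
      _ ≤ M := Finset.single_le_sum (f := fun j => max (Mf j) 0)
            (fun i _ => le_max_right _ _) (Finset.mem_Icc.mpr ⟨h1, h2⟩)
  refine ⟨3 * M, ?_⟩
  intro η hη
  have hk0 : (0 : ℝ) < k := by exact_mod_cast hk
  have huc : UniformContinuous (φ k) :=
    CompactSpace.uniformContinuous_of_continuous (hφ.1 k hk)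
  obtain ⟨ε₀, hε₀, hδ⟩ := Metric.uniformContinuous_iff.mp huc (k * η) (by positivity)
  refine ⟨ε₀, hε₀, ?_⟩
  intro ε hε hεlt n hn x
  rw [sub_le_iff_le_add, sub_le_iff_le_add]
  -- Goal: supBowen ... ≤ φ n x + 3 * M + n * η
  have hxmem : x ∈ bowenBall T n x ε := fun i _ => by simpa using hε
  have hsumx : ∑ i ∈ Finset.range n, (k : ℝ)⁻¹ * φ k (T^[i] x) ≤ φ n x + 3 * M := by
    have h := sum_phi_le T φ hφ k hk M hM n hn x
    rw [← Finset.mul_sum]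
    calc (k : ℝ)⁻¹ * ∑ i ∈ Finset.range n, φ k (T^[i] x)
        ≤ (k : ℝ)⁻¹ * (k * φ n x + 3 * k * M) := by
          apply mul_le_mul_of_nonneg_left h (by positivity)
      _ = φ n x + 3 * M := by field_simp
  apply csSup_le
  · exact ⟨_, Set.mem_image_of_mem _ hxmem⟩
  · rintro v ⟨y, hy, rfl⟩
    have hterm : ∀ i ∈ Finset.range n,
        (k : ℝ)⁻¹ * φ k (T^[i] y) ≤ (k : ℝ)⁻¹ * φ k (T^[i] x) + η := by
      intro i hi
      have hd : dist (T^[i] x) (T^[i] y) < ε₀ :=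
        lt_trans (hy i (Finset.mem_range.mp hi)) hεlt
      have habs : |φ k (T^[i] x) - φ k (T^[i] y)| < k * η := by
        have := hδ hd; rwa [Real.dist_eq] at this
      have hle : φ k (T^[i] y) ≤ φ k (T^[i] x) + k * η := by
        have := abs_lt.mp habs; linarith [this.1]
      calc (k : ℝ)⁻¹ * φ k (T^[i] y) ≤ (k : ℝ)⁻¹ * (φ k (T^[i] x) + k * η) := by
            apply mul_le_mul_of_nonneg_left hle (by positivity)
        _ = (k : ℝ)⁻¹ * φ k (T^[i] x) + η := by field_simp
    have hsum : birkhoffPot T (fun y => (k : ℝ)⁻¹ * φ k y) n y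
        ≤ (∑ i ∈ Finset.range n, (k : ℝ)⁻¹ * φ k (T^[i] x)) + n * η := by
      unfold birkhoffPot
      calc ∑ i ∈ Finset.range n, (k : ℝ)⁻¹ * φ k (T^[i] y)
          ≤ ∑ i ∈ Finset.range n, ((k : ℝ)⁻¹ * φ k (T^[i] x) + η) :=
            Finset.sum_le_sum hterm
        _ = (∑ i ∈ Finset.range n, (k : ℝ)⁻¹ * φ k (T^[i] x)) + n * η := by
            rw [Finset.sum_add_distrib, Finset.sum_const, Finset.card_range]
            push_cast; ring
    linarith
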